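/- arXiv:2012.00479 — 4 statements merged into one kernel-verified Lean document; each statement's English description precedes it below -/
import Mathlib

section
/- Let A, B be Hermitian n×n matrices with B positive semidefinite and (A,B) regular. Then the pencil (A,B) has a defective infinite eigenvalue (i.e., there exist nonzero x, y with Bx = 0 and By = Ax) if and only if the Hermitian matrix N^H A N is singular, where N is a matrix whose columns form a basis of the null space of B. -/
open Matrix ComplexOrder

/-- For a Hermitian matrix `B`, anything orthogonal to the kernel of `B`
is in the range of `B`. -/
lemma herm_range {n : ℕ} {B : Matrix (Fin n) (Fin n) ℂ} (hB : B.IsHermitian)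
    (u : Fin n → ℂ) (h : ∀ w : Fin n → ℂ, B.mulVec w = 0 → star w ⬝ᵥ u = 0) :
    ∃ y, B.mulVec y = u := by
  set T := Matrix.toEuclideanLin B with hT
  have hsym : T.IsSymmetric := Matrix.isHermitian_iff_isSymmetric.1 hB
  have hle : LinearMap.range T ≤ (LinearMap.ker T)ᗮ := by
    rintro _ ⟨z, rfl⟩
    rw [Submodule.mem_orthogonal]
    intro w hw
    rw [← hsym w z, LinearMap.mem_ker.mp hw, inner_zero_left]
  have hrank : Module.finrank ℂ (LinearMap.range T)
      = Module.finrank ℂ ((LinearMap.ker T)ᗮ) := by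
    have h1 := LinearMap.finrank_range_add_finrank_ker T
    have h2 := Submodule.finrank_add_finrank_orthogonal (LinearMap.ker T)
    omega
  have heq : LinearMap.range T = (LinearMap.ker T)ᗮ :=
    Submodule.eq_of_le_of_finrank_eq hle hrank
  have hu : (WithLp.equiv 2 (Fin n → ℂ)).symm u ∈ (LinearMap.ker T)ᗮ := by
    rw [Submodule.mem_orthogonal]
    intro w hw
    have hw' : B.mulVec (WithLp.equiv 2 (Fin n → ℂ) w) = 0 := by
      have := LinearMap.mem_ker.mp hw
      rw [hT, Matrix.toEuclideanLin_apply] at this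
      have := congrArg (WithLp.equiv 2 (Fin n → ℂ)) this
      simpa using this
    have := h _ hw'
    simpa [PiLp.inner_apply, dotProduct, RCLike.inner_apply,
      WithLp.equiv, mul_comm] using this
  rw [← heq] at hu
  obtain ⟨y, hy⟩ := hu
  refine ⟨WithLp.equiv 2 (Fin n → ℂ) y, ?_⟩
  rw [hT, Matrix.toEuclideanLin_apply] at hy
  have := congrArg (WithLp.equiv 2 (Fin n → ℂ)) hy
  simpa using this

/-- For a regular Hermitian pencil (A,B) with B ⪰ 0, the pencil has a
defective infinite eigenvalue (∃ x ≠ 0, y with Bx = 0 and By = Ax) iff NᴴAN is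
singular, where the columns of N form a basis of the null space of B. -/
theorem stmt3 {n k : ℕ} (A B : Matrix (Fin n) (Fin n) ℂ)
    (hA : A.IsHermitian) (hB : B.PosSemidef)
    (hreg : ∃ ω : ℂ, (A - ω • B).det ≠ 0)
    (N : Matrix (Fin n) (Fin k) ℂ)
    (hNinj : ∀ v : Fin k → ℂ, N.mulVec v = 0 → v = 0)
    (hNspan : ∀ x : Fin n → ℂ, B.mulVec x = 0 ↔ ∃ v, x = N.mulVec v) :
    (∃ x y : Fin n → ℂ, x ≠ 0 ∧ B.mulVec x = 0 ∧ B.mulVec y = A.mulVec x) ↔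
      (Nᴴ * A * N).det = 0 := by
  have hBN : B * N = 0 := by
    ext i j
    have : B.mulVec (fun l => N l j) = 0 :=
      (hNspan _).mpr ⟨Pi.single j 1, by simp [Matrix.mulVec_single]; rfl⟩
    have := congrFun this i
    simpa [Matrix.mul_apply, Matrix.mulVec, dotProduct] using this
  have hNB : Nᴴ * B = 0 := by
    have : (B * N)ᴴ = 0 := by rw [hBN]; simp
    rwa [Matrix.conjTranspose_mul, hB.isHermitian.eq] at this
  constructor
  · rintro ⟨x, y, hx, hBx, hBy⟩
    obtain ⟨v, rfl⟩ := (hNspan x).mp hBx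
    have hv : v ≠ 0 := fun h => hx (by simp [h])
    rw [← Matrix.exists_mulVec_eq_zero_iff]
    refine ⟨v, hv, ?_⟩
    calc (Nᴴ * A * N).mulVec v = Nᴴ.mulVec (A.mulVec (N.mulVec v)) := by
          rw [← Matrix.mulVec_mulVec, ← Matrix.mulVec_mulVec]
      _ = Nᴴ.mulVec (B.mulVec y) := by rw [← hBy]
      _ = (Nᴴ * B).mulVec y := by rw [Matrix.mulVec_mulVec]
      _ = 0 := by rw [hNB]; simp
  · intro hdet
    obtain ⟨v, hv, hv0⟩ := Matrix.exists_mulVec_eq_zero_iff.mpr hdet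
    have hy : ∃ y, B.mulVec y = A.mulVec (N.mulVec v) := by
      apply herm_range hB.isHermitian
      intro w hw
      obtain ⟨s, rfl⟩ := (hNspan w).mp hw
      calc star (N *ᵥ s) ⬝ᵥ (A *ᵥ (N *ᵥ v))
          = (star s ᵥ* Nᴴ) ⬝ᵥ ((A * N) *ᵥ v) := by
            rw [Matrix.star_mulVec, Matrix.mulVec_mulVec]
        _ = star s ⬝ᵥ ((Nᴴ * (A * N)) *ᵥ v) := by
            rw [Matrix.dotProduct_mulVec, Matrix.dotProduct_mulVec, Matrix.vecMul_vecMul]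
        _ = 0 := by rw [← Matrix.mul_assoc, hv0, dotProduct_zero]
    obtain ⟨y, hy⟩ := hy
    exact ⟨N.mulVec v, y, fun h => hv (hNinj v h), (hNspan _).mpr ⟨v, rfl⟩, hy⟩
end

section
/- For any real μ ∈ {1,-1}, real α, real ω ≠ α, and even size k = 2s, the Hermitian matrix L = μ((α-ω)F_k + G_k) has inertia p₊(L) = s and p₋(L) = s, where F_k is the k×k anti-identity and G_k the k×k matrix with 1's in positions (i,j) with i+j = k. -/
open Matrix

/-- The k×k anti-identity over ℝ (1-based: ones where i+j = k+1). -/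
def FmatR (k : ℕ) : Matrix (Fin k) (Fin k) ℝ :=
  Matrix.of fun i j => if (i : ℕ) + (j : ℕ) + 1 = k then 1 else 0

/-- The k×k shifted anti-identity over ℝ (1-based: ones where i+j = k). -/
def GmatR (k : ℕ) : Matrix (Fin k) (Fin k) ℝ :=
  Matrix.of fun i j => if (i : ℕ) + (j : ℕ) + 2 = k then 1 else 0

lemma star_real (n : ℕ) (M : Matrix (Fin n) (Fin n) ℝ) : star M = Mᵀ := by
  ext i j; simp [Matrix.star_eq_conjTranspose, Matrix.conjTranspose_apply]

/-- Quadratic form in terms of eigenvalues. -/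
lemma quad_eq (n : ℕ) (A : Matrix (Fin n) (Fin n) ℝ) (hA : A.IsHermitian) (x : Fin n → ℝ) :
    x ⬝ᵥ (A *ᵥ x) = ∑ i, hA.eigenvalues i *
      ((star (hA.eigenvectorUnitary : Matrix (Fin n) (Fin n) ℝ) *ᵥ x) i)^2 := by
  set U : Matrix (Fin n) (Fin n) ℝ := (hA.eigenvectorUnitary : Matrix (Fin n) (Fin n) ℝ) with hU
  set c : Fin n → ℝ := star U *ᵥ x with hc
  have hofReal : (RCLike.ofReal ∘ hA.eigenvalues : Fin n → ℝ) = hA.eigenvalues := by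
    ext i; simp
  conv_lhs => rw [hA.spectral_theorem]
  rw [Unitary.conjStarAlgAut_apply, hofReal, ← hU, ← Matrix.mulVec_mulVec, ← Matrix.mulVec_mulVec,
    dotProduct_mulVec, ← Matrix.mulVec_transpose, ← star_real n U, ← hc]
  simp only [dotProduct, Matrix.mulVec_diagonal]; exact Finset.sum_congr rfl fun i _ => by ring


/-- Sign-generic inertia bound from an isotropic coordinate block. -/
lemma card_le_of_block (s : ℕ) (L : Matrix (Fin (2*s)) (Fin (2*s)) ℝ) (hL : L.IsHermitian)
    (hblock : ∀ i j : Fin (2*s), s ≤ (i : ℕ) → s ≤ (j : ℕ) → L i j = 0)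
    (σ : ℝ) (P : Fin (2*s) → Prop) [DecidablePred P]
    (hP : ∀ i, P i ↔ 0 < σ * hL.eigenvalues i) :
    Fintype.card {i // P i} ≤ s := by
  by_contra hgt
  push_neg at hgt
  set U : Matrix (Fin (2*s)) (Fin (2*s)) ℝ := (hL.eigenvectorUnitary : Matrix (Fin (2*s)) (Fin (2*s)) ℝ) with hU
  -- the two linear maps
  set T1 : (Fin (2*s) → ℝ) →ₗ[ℝ] ({i // ¬ P i} → ℝ) :=
    (LinearMap.funLeft ℝ ℝ (Subtype.val)).comp (Matrix.mulVecLin (star U)) with hT1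
  set T2 : (Fin (2*s) → ℝ) →ₗ[ℝ] (Fin s → ℝ) :=
    LinearMap.funLeft ℝ ℝ (fun i : Fin s => (⟨(i : ℕ), by omega⟩ : Fin (2*s))) with hT2
  set V := LinearMap.ker T1
  set W := LinearMap.ker T2
  have hn : Module.finrank ℝ (Fin (2*s) → ℝ) = 2*s := by
    rw [Module.finrank_fintype_fun_eq_card]; simp
  have hVrank : Fintype.card {i // P i} ≤ Module.finrank ℝ V := by
    have h1 := LinearMap.finrank_range_add_finrank_ker T1
    have hVk : Module.finrank ℝ ↥V = Module.finrank ℝ ↥(LinearMap.ker T1) := rfl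
    rw [hn, ← hVk] at h1
    have h2 : Module.finrank ℝ (LinearMap.range T1) ≤ Fintype.card {i // ¬ P i} := by
      calc Module.finrank ℝ (LinearMap.range T1) ≤ Module.finrank ℝ ({i // ¬ P i} → ℝ) :=
            (LinearMap.range T1).finrank_le
        _ = Fintype.card {i // ¬ P i} := Module.finrank_fintype_fun_eq_card ℝ
    have h3 : Fintype.card {i // ¬ P i} = 2*s - Fintype.card {i // P i} := by
      simpa using Fintype.card_subtype_compl P
    have h4 : Fintype.card {i // P i} ≤ 2*s := by
      simpa using Fintype.card_subtype_le P
    omega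
  have hWrank : s ≤ Module.finrank ℝ W := by
    have h1 := LinearMap.finrank_range_add_finrank_ker T2
    have hWk : Module.finrank ℝ ↥W = Module.finrank ℝ ↥(LinearMap.ker T2) := rfl
    rw [hn, ← hWk] at h1
    have h2 : Module.finrank ℝ (LinearMap.range T2) ≤ s := by
      calc Module.finrank ℝ (LinearMap.range T2) ≤ Module.finrank ℝ (Fin s → ℝ) :=
            (LinearMap.range T2).finrank_le
        _ = s := by rw [Module.finrank_fintype_fun_eq_card]; simp
    omega
  have hinf : 0 < Module.finrank ℝ ↥(V ⊓ W) := by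
    have h1 := Submodule.finrank_sup_add_finrank_inf_eq V W
    have h2 : Module.finrank ℝ ↥(V ⊔ W) ≤ 2*s := le_trans (Submodule.finrank_le _) (le_of_eq hn)
    omega
  have : Nontrivial ↥(V ⊓ W) := Module.finrank_pos_iff.mp hinf
  obtain ⟨⟨x, hxVW⟩, hxne⟩ := exists_ne (0 : ↥(V ⊓ W))
  have hx0 : x ≠ 0 := fun h => hxne (Subtype.ext h)
  have hxV : x ∈ V := hxVW.1
  have hxW : x ∈ W := hxVW.2
  -- Q x = 0 from the zero block
  have hxW' : ∀ i : Fin (2*s), (i : ℕ) < s → x i = 0 := by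
    intro i hi
    have := congrFun (LinearMap.mem_ker.mp hxW) ⟨(i : ℕ), hi⟩
    simpa [hT2, LinearMap.funLeft] using this
  have hQ0 : x ⬝ᵥ (L *ᵥ x) = 0 := by
    rw [dotProduct, Finset.sum_eq_zero]
    intro i _
    rw [Matrix.mulVec, dotProduct]
    by_cases hi : (i : ℕ) < s
    · rw [hxW' i hi, zero_mul]
    · rw [Finset.mul_sum, Finset.sum_eq_zero]
      intro j _
      by_cases hj : (j : ℕ) < s
      · rw [hxW' j hj, mul_zero, mul_zero]
      · rw [hblock i j (by omega) (by omega), zero_mul, mul_zero]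
  -- σ * Q x > 0 from positivity on V
  set c : Fin (2*s) → ℝ := star U *ᵥ x with hc
  have hcV : ∀ i, ¬ P i → c i = 0 := by
    intro i hi
    have := congrFun (LinearMap.mem_ker.mp hxV) ⟨i, hi⟩
    simpa [hT1, LinearMap.funLeft, hc] using this
  have hcne : c ≠ 0 := by
    intro h
    apply hx0
    have : (U * star U) *ᵥ x = x := by
      rw [(Matrix.mem_unitaryGroup_iff).mp hL.eigenvectorUnitary.2, Matrix.one_mulVec]
    rw [← this, ← Matrix.mulVec_mulVec, ← hc, h, Matrix.mulVec_zero]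
  obtain ⟨i0, hi0⟩ : ∃ i, c i ≠ 0 := by
    by_contra h; push_neg at h; exact hcne (funext h)
  have hPi0 : P i0 := by
    by_contra h; exact hi0 (hcV i0 h)
  have hQpos : 0 < σ * (x ⬝ᵥ (L *ᵥ x)) := by
    rw [quad_eq (2*s) L hL x, ← hU, ← hc, Finset.mul_sum]
    apply Finset.sum_pos'
    · intro i _
      by_cases h : P i
      · have := (hP i).mp h
        nlinarith [sq_nonneg (c i)]
      · rw [hcV i h]; ring_nf; simp
    · refine ⟨i0, Finset.mem_univ _, ?_⟩
      have := (hP i0).mp hPi0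
      have hsq : 0 < c i0 ^ 2 := by positivity
      nlinarith
  rw [hQ0, mul_zero] at hQpos
  exact lt_irrefl 0 hQpos

/-- For μ ∈ {1,-1}, real α, real ω ≠ α, and even size k = 2s, the
Hermitian matrix L = μ((α-ω)F_k + G_k) has inertia p₊(L) = s = p₋(L). -/
theorem stmt10 (s : ℕ) (μ α ω : ℝ) (hμ : μ = 1 ∨ μ = -1) (hω : ω ≠ α)
    (L : Matrix (Fin (2 * s)) (Fin (2 * s)) ℝ)
    (hLdef : L = μ • ((α - ω) • FmatR (2 * s) + GmatR (2 * s)))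
    (hL : L.IsHermitian) :
    Fintype.card {i // 0 < hL.eigenvalues i} = s ∧
      Fintype.card {i // hL.eigenvalues i < 0} = s := by
  have hμ0 : μ ≠ 0 := by rcases hμ with h | h <;> rw [h] <;> norm_num
  have ha : μ * (α - ω) ≠ 0 := mul_ne_zero hμ0 (sub_ne_zero.mpr (Ne.symm hω))
  have hE : ∀ i j : Fin (2*s), L i j =
      (if (i:ℕ)+(j:ℕ)+1 = 2*s then μ*(α-ω) else 0) +
      (if (i:ℕ)+(j:ℕ)+2 = 2*s then μ else 0) := by
    intro i j
    simp only [hLdef, Matrix.smul_apply, Matrix.add_apply, FmatR, GmatR, Matrix.of_apply,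
      smul_eq_mul]
    split_ifs <;> first | ring | omega
  have hblock : ∀ i j : Fin (2*s), s ≤ (i:ℕ) → s ≤ (j:ℕ) → L i j = 0 := by
    intro i j hi hj
    rw [hE]
    rw [if_neg (by omega), if_neg (by omega), add_zero]
  -- kernel is trivial
  have hker : ∀ x : Fin (2*s) → ℝ, L *ᵥ x = 0 → x = 0 := by
    intro x hx
    have key : ∀ m : ℕ, ∀ hm : m < 2*s, x ⟨m, hm⟩ = 0 := by
      intro m
      induction m using Nat.strong_induction_on with
      | _ m IH =>
        intro hm
        set i : Fin (2*s) := ⟨2*s-1-m, by omega⟩ with hi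
        set jm : Fin (2*s) := ⟨m, hm⟩ with hjm
        have h0 := congrFun hx i
        rw [Matrix.mulVec, dotProduct, Pi.zero_apply] at h0
        by_cases hm1 : 1 ≤ m
        · set j2 : Fin (2*s) := ⟨m-1, by omega⟩ with hj2
          have hx2 : x j2 = 0 := IH (m-1) (by omega) (by omega)
          have hterm : ∀ j : Fin (2*s), L i j * x j =
              (if j = jm then μ*(α-ω) * x jm else 0) := by
            intro j
            rw [hE]
            have hiv : (i:ℕ) = 2*s-1-m := rfl
            by_cases hj : j = jm
            · have hjv : (j:ℕ) = m := by rw [hj]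
              rw [if_pos (by omega), if_neg (by omega), if_pos hj, hj]
              ring
            · have hjv : (j:ℕ) ≠ m := fun h => hj (Fin.ext h)
              rw [if_neg hj, if_neg (by omega)]
              by_cases hj' : (j:ℕ) = m - 1
              · have hjj : j = j2 := Fin.ext (by rw [hj'])
                rw [if_pos (by omega), hjj, hx2]
                ring
              · rw [if_neg (by omega)]
                ring
          rw [Finset.sum_congr rfl (fun j _ => hterm j), Finset.sum_ite_eq'] at h0
          simp only [Finset.mem_univ, if_true] at h0
          have := mul_eq_zero.mp h0
          tauto
        · have hterm : ∀ j : Fin (2*s), L i j * x j =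
              (if j = jm then μ*(α-ω) * x jm else 0) := by
            intro j
            rw [hE]
            have hiv : (i:ℕ) = 2*s-1-m := rfl
            by_cases hj : j = jm
            · have hjv : (j:ℕ) = m := by rw [hj]
              rw [if_pos (by omega), if_neg (by omega), if_pos hj, hj]
              ring
            · have hjv : (j:ℕ) ≠ m := fun h => hj (Fin.ext h)
              rw [if_neg hj, if_neg (by omega), if_neg (by omega)]
              ring
          rw [Finset.sum_congr rfl (fun j _ => hterm j), Finset.sum_ite_eq'] at h0
          simp only [Finset.mem_univ, if_true] at h0
          have := mul_eq_zero.mp h0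
          tauto
    funext j
    exact key (j:ℕ) j.isLt ▸ (by simpa using key (j:ℕ) j.isLt)
  have hdet : L.det ≠ 0 := by
    intro h
    obtain ⟨v, hv0, hv⟩ := (Matrix.exists_mulVec_eq_zero_iff).mpr h
    exact hv0 (hker v hv)
  have hlam : ∀ i, hL.eigenvalues i ≠ 0 := by
    intro i h
    apply hdet
    rw [hL.det_eq_prod_eigenvalues]
    exact Finset.prod_eq_zero (Finset.mem_univ i) (by simp [h])
  -- apply the inertia bound with both signs
  have hp1 : Fintype.card {i // 0 < hL.eigenvalues i} ≤ s :=
    card_le_of_block s L hL hblock 1 _ (fun i => by rw [one_mul])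
  have hp2 : Fintype.card {i // hL.eigenvalues i < 0} ≤ s :=
    card_le_of_block s L hL hblock (-1) _
      (fun i => by constructor <;> intro h <;> nlinarith)
  have hcompl : Fintype.card {i // ¬ 0 < hL.eigenvalues i}
      = 2*s - Fintype.card {i // 0 < hL.eigenvalues i} := by
    simpa using Fintype.card_subtype_compl (fun i => 0 < hL.eigenvalues i)
  have hceq : Fintype.card {i // hL.eigenvalues i < 0}
      = Fintype.card {i // ¬ 0 < hL.eigenvalues i} :=
    Fintype.card_congr (Equiv.subtypeEquivRight fun i => by
      constructor
      · intro h; exact not_lt.mpr (le_of_lt h)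
      · intro h; exact lt_of_le_of_ne (not_lt.mp h) (hlam i))
  have hle : Fintype.card {i // 0 < hL.eigenvalues i} ≤ 2*s := by
    simpa using Fintype.card_subtype_le (fun i => 0 < hL.eigenvalues i)
  omega
end

section
/- For μ ∈ {1,-1}, real α, real ω ≠ α, and odd size k = 2s - 1, the Hermitian matrix L = μ((α-ω)F_k + G_k) has inertia p₊(L) = s - 1 + (1 + μ·sign(α-ω))/2 and p₋(L) = s - 1 + (1 - μ·sign(α-ω))/2. -/
open Matrix RealInnerProductSpace

section Aux

lemma detF_succ (k : ℕ) : (FmatR (k+1)).det = (-1)^k * (FmatR k).det := by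
  rw [Matrix.det_succ_row_zero]
  rw [Finset.sum_eq_single (Fin.last k)]
  · have h1 : FmatR (k+1) 0 (Fin.last k) = 1 := by simp [FmatR]
    have h2 : (FmatR (k+1)).submatrix Fin.succ (Fin.last k).succAbove = FmatR k := by
      ext i j
      have hi := i.isLt
      have hj := j.isLt
      simp [FmatR, Fin.succAbove, Fin.lt_iff_val_lt_val]
      split <;> split <;> first | rfl | omega
    rw [h1, h2]
    simp [Fin.val_last]
  · intro j _ hj
    have hj2 := j.isLt
    have : FmatR (k+1) 0 j = 0 := by
      simp only [FmatR, Matrix.of_apply, Fin.val_zero]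
      refine if_neg ?_
      intro h
      apply hj
      exact Fin.ext (by simp [Fin.val_last]; omega)
    rw [this]; ring
  · intro h; exact absurd (Finset.mem_univ _) h

lemma detF_odd (s : ℕ) : (FmatR (2*s+1)).det = (-1)^s := by
  induction s with
  | zero => simp [Matrix.det_fin_one, FmatR]
  | succ t ih =>
    have e : 2*(t+1)+1 = (2*t+1) + 1 + 1 := by ring
    rw [e, detF_succ, detF_succ, ih]
    have h1 : ((-1:ℝ))^(2*t+1+1) = 1 := by
      rw [show 2*t+1+1 = 2*(t+1) by ring]; simp [pow_mul]
    have h2 : ((-1:ℝ))^(2*t+1) = -1 := by simp [pow_succ, pow_mul]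
    rw [h1, h2]; ring

def TmatR (k : ℕ) (a : ℝ) : Matrix (Fin k) (Fin k) ℝ :=
  Matrix.of fun i j => (if i = j then a else 0) + (if (i : ℕ) = (j : ℕ) + 1 then 1 else 0)

lemma factorFG (k : ℕ) (a : ℝ) :
    a • FmatR k + GmatR k = FmatR k * TmatR k a := by
  ext i j
  have hi := i.isLt
  have hj := j.isLt
  rw [Matrix.mul_apply]
  have hm : ∀ m : Fin k, FmatR k i m = if m = (⟨k - 1 - i, by omega⟩ : Fin k) then 1 else 0 := by
    intro m
    have hm2 := m.isLt
    simp only [FmatR, Matrix.of_apply, Fin.ext_iff]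
    congr 1
    simp only [eq_iff_iff]
    omega
  simp only [hm, ite_mul, one_mul, zero_mul]
  rw [Finset.sum_ite_eq' Finset.univ]
  simp only [Finset.mem_univ, if_true]
  simp only [TmatR, FmatR, GmatR, Matrix.add_apply, Matrix.smul_apply, Matrix.of_apply,
    Fin.ext_iff, smul_eq_mul]
  by_cases h1 : (i:ℕ) + j + 1 = k
  · rw [if_pos h1, if_neg (show ¬(i:ℕ) + j + 2 = k by omega),
      if_pos (show k - 1 - (i:ℕ) = j by omega),
      if_neg (show ¬k - 1 - (i:ℕ) = (j:ℕ) + 1 by omega)]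
    ring
  · by_cases h2 : (i:ℕ) + j + 2 = k
    · rw [if_neg h1, if_pos h2, if_neg (show ¬k - 1 - (i:ℕ) = j by omega),
        if_pos (show k - 1 - (i:ℕ) = (j:ℕ) + 1 by omega)]
      ring
    · rw [if_neg h1, if_neg h2, if_neg (show ¬k - 1 - (i:ℕ) = j by omega),
        if_neg (show ¬k - 1 - (i:ℕ) = (j:ℕ) + 1 by omega)]
      ring

lemma detT (k : ℕ) (a : ℝ) : (TmatR k a).det = a ^ k := by
  rw [Matrix.det_of_lowerTriangular]
  · have hd : ∀ i : Fin k, TmatR k a i i = a := by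
      intro i
      show (if i = i then a else 0) + (if (i:ℕ) = (i:ℕ) + 1 then 1 else 0) = a
      rw [if_pos rfl, if_neg (by omega)]
      ring
    simp [hd]
  · intro i j hij
    have hij' : (i:ℕ) < (j:ℕ) := hij
    simp only [TmatR, Matrix.of_apply]
    rw [if_neg (fun h => absurd (congrArg Fin.val h) (by omega)),
      if_neg (show ¬(i:ℕ) = (j:ℕ) + 1 by omega)]
    ring

lemma detFG (k : ℕ) (a : ℝ) :
    (a • FmatR k + GmatR k).det = (FmatR k).det * a ^ k := by
  rw [factorFG, Matrix.det_mul, detT]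


variable {n : ℕ} {A : Matrix (Fin n) (Fin n) ℝ}

lemma inner_eq_dot (u v : EuclideanSpace ℝ (Fin n)) :
    ⟪u, v⟫ = (u : Fin n → ℝ) ⬝ᵥ (v : Fin n → ℝ) := by
  simp [PiLp.inner_apply, dotProduct, RCLike.inner_apply, mul_comm]

lemma repr_mulVec (hA : A.IsHermitian) (x : EuclideanSpace ℝ (Fin n)) (i : Fin n) :
    hA.eigenvectorBasis.repr (WithLp.toLp 2 (A *ᵥ x) : EuclideanSpace ℝ (Fin n)) i
      = hA.eigenvalues i * hA.eigenvectorBasis.repr x i := by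
  set B := hA.eigenvectorBasis
  rw [B.repr_apply_apply, B.repr_apply_apply, inner_eq_dot, inner_eq_dot,
    WithLp.ofLp_toLp, dotProduct_mulVec]
  have hAT : Aᵀ = A := by
    rw [← Matrix.conjTranspose_eq_transpose_of_trivial, hA.eq]
  have h2 : ∀ v : Fin n → ℝ, v ᵥ* A = A *ᵥ v := by
    intro v
    conv_lhs => rw [← hAT]
    rw [Matrix.vecMul_transpose]
  rw [h2]
  erw [hA.mulVec_eigenvectorBasis, smul_dotProduct]
  rfl

lemma parseval (hA : A.IsHermitian) (x : EuclideanSpace ℝ (Fin n)) :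
    ⟪x, (WithLp.toLp 2 (A *ᵥ x) : EuclideanSpace ℝ (Fin n))⟫
      = ∑ i, hA.eigenvalues i * (hA.eigenvectorBasis.repr x i)^2 := by
  set B := hA.eigenvectorBasis
  rw [← B.repr.inner_map_map x (WithLp.toLp 2 (A *ᵥ x) : EuclideanSpace ℝ (Fin n)), PiLp.inner_apply]
  refine Finset.sum_congr rfl fun i _ => ?_
  rw [repr_mulVec hA x i]
  simp [RCLike.inner_apply]
  ring

lemma repr_zero_of_span (hA : A.IsHermitian) (p : Fin n → Prop) [DecidablePred p]
    (x : EuclideanSpace ℝ (Fin n))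
    (hx : x ∈ Submodule.span ℝ (Set.range fun i : {i // p i} =>
      (hA.eigenvectorBasis i.1 : EuclideanSpace ℝ (Fin n))))
    (i : Fin n) (hi : ¬ p i) : hA.eigenvectorBasis.repr x i = 0 := by
  set B := hA.eigenvectorBasis
  rw [B.repr_apply_apply]
  have hsub : Submodule.span ℝ (Set.range fun j : {j // p j} =>
      (B j.1 : EuclideanSpace ℝ (Fin n))) ≤ LinearMap.ker (innerₛₗ ℝ (B i)) := by
    rw [Submodule.span_le]
    rintro v ⟨j, rfl⟩
    rw [SetLike.mem_coe, LinearMap.mem_ker]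
    have hij : i ≠ j.1 := fun h => hi (h ▸ j.2)
    exact B.orthonormal.2 hij
  have := hsub hx
  rwa [LinearMap.mem_ker] at this

lemma quad_pos (hA : A.IsHermitian) (x : EuclideanSpace ℝ (Fin n))
    (hx : x ∈ Submodule.span ℝ (Set.range fun i : {i // 0 < hA.eigenvalues i} =>
      (hA.eigenvectorBasis i.1 : EuclideanSpace ℝ (Fin n))))
    (hx0 : x ≠ 0) : 0 < ⟪x, (WithLp.toLp 2 (A *ᵥ x) : EuclideanSpace ℝ (Fin n))⟫ := by
  rw [parseval hA x]
  have hxr : hA.eigenvectorBasis.repr x ≠ 0 := fun h => hx0 (by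
    simpa using congrArg hA.eigenvectorBasis.repr.symm h)
  obtain ⟨i, hci⟩ : ∃ i, hA.eigenvectorBasis.repr x i ≠ 0 := by
    by_contra h; push_neg at h; exact hxr (WithLp.ofLp_injective 2 (funext h))
  refine Finset.sum_pos' (fun j _ => ?_) ⟨i, Finset.mem_univ i, ?_⟩
  · by_cases hj : 0 < hA.eigenvalues j
    · exact mul_nonneg hj.le (sq_nonneg _)
    · rw [repr_zero_of_span hA _ x hx j hj]; simp
  · have hip : 0 < hA.eigenvalues i := by
      by_contra h
      exact hci (repr_zero_of_span hA _ x hx i h)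
    exact mul_pos hip (by positivity)

lemma quad_neg (hA : A.IsHermitian) (x : EuclideanSpace ℝ (Fin n))
    (hx : x ∈ Submodule.span ℝ (Set.range fun i : {i // hA.eigenvalues i < 0} =>
      (hA.eigenvectorBasis i.1 : EuclideanSpace ℝ (Fin n))))
    (hx0 : x ≠ 0) : ⟪x, (WithLp.toLp 2 (A *ᵥ x) : EuclideanSpace ℝ (Fin n))⟫ < 0 := by
  rw [parseval hA x, ← neg_pos, ← Finset.sum_neg_distrib]
  have hxr : hA.eigenvectorBasis.repr x ≠ 0 := fun h => hx0 (by
    simpa using congrArg hA.eigenvectorBasis.repr.symm h)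
  obtain ⟨i, hci⟩ : ∃ i, hA.eigenvectorBasis.repr x i ≠ 0 := by
    by_contra h; push_neg at h; exact hxr (WithLp.ofLp_injective 2 (funext h))
  refine Finset.sum_pos' (fun j _ => ?_) ⟨i, Finset.mem_univ i, ?_⟩
  · by_cases hj : hA.eigenvalues j < 0
    · have := sq_nonneg (hA.eigenvectorBasis.repr x j)
      nlinarith
    · rw [repr_zero_of_span hA _ x hx j hj]; simp
  · have hip : hA.eigenvalues i < 0 := by
      by_contra h
      exact hci (repr_zero_of_span hA _ x hx i h)
    have : (0:ℝ) < (hA.eigenvectorBasis.repr x i)^2 := by positivity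
    nlinarith

lemma card_pos_le (hA : A.IsHermitian) (W : Submodule ℝ (EuclideanSpace ℝ (Fin n)))
    (hW : ∀ x ∈ W, ⟪x, (WithLp.toLp 2 (A *ᵥ x) : EuclideanSpace ℝ (Fin n))⟫ = 0) :
    Fintype.card {i // 0 < hA.eigenvalues i} + Module.finrank ℝ W ≤ n := by
  set B := hA.eigenvectorBasis
  set g : {i // 0 < hA.eigenvalues i} → EuclideanSpace ℝ (Fin n) := fun i => B i.1 with hg
  set V := Submodule.span ℝ (Set.range g) with hV
  have hind : LinearIndependent ℝ g :=
    (B.orthonormal.comp _ Subtype.coe_injective).linearIndependent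
  have hdim : Module.finrank ℝ V = Fintype.card {i // 0 < hA.eigenvalues i} :=
    finrank_span_eq_card hind
  have hdisj : V ⊓ W = ⊥ := by
    rw [Submodule.eq_bot_iff]
    rintro x ⟨hxV, hxW⟩
    by_contra hx0
    exact absurd (hW x hxW) (ne_of_gt (quad_pos hA x hxV hx0))
  have hsum := Submodule.finrank_sup_add_finrank_inf_eq V W
  rw [hdisj] at hsum
  have hle : Module.finrank ℝ ↥(V ⊔ W) ≤ n := by
    have := Submodule.finrank_le (V ⊔ W)
    rwa [finrank_euclideanSpace_fin] at this
  simp only [finrank_bot, add_zero] at hsum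
  rw [hdim] at hsum
  omega

lemma card_neg_le (hA : A.IsHermitian) (W : Submodule ℝ (EuclideanSpace ℝ (Fin n)))
    (hW : ∀ x ∈ W, ⟪x, (WithLp.toLp 2 (A *ᵥ x) : EuclideanSpace ℝ (Fin n))⟫ = 0) :
    Fintype.card {i // hA.eigenvalues i < 0} + Module.finrank ℝ W ≤ n := by
  set B := hA.eigenvectorBasis
  set g : {i // hA.eigenvalues i < 0} → EuclideanSpace ℝ (Fin n) := fun i => B i.1 with hg
  set V := Submodule.span ℝ (Set.range g) with hV
  have hind : LinearIndependent ℝ g :=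
    (B.orthonormal.comp _ Subtype.coe_injective).linearIndependent
  have hdim : Module.finrank ℝ V = Fintype.card {i // hA.eigenvalues i < 0} :=
    finrank_span_eq_card hind
  have hdisj : V ⊓ W = ⊥ := by
    rw [Submodule.eq_bot_iff]
    rintro x ⟨hxV, hxW⟩
    by_contra hx0
    exact absurd (hW x hxW) (ne_of_lt (quad_neg hA x hxV hx0))
  have hsum := Submodule.finrank_sup_add_finrank_inf_eq V W
  rw [hdisj] at hsum
  have hle : Module.finrank ℝ ↥(V ⊔ W) ≤ n := by
    have := Submodule.finrank_le (V ⊔ W)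
    rwa [finrank_euclideanSpace_fin] at this
  simp only [finrank_bot, add_zero] at hsum
  rw [hdim] at hsum
  omega


/-- The subspace of vectors supported on the first `r` coordinates. -/
noncomputable def phiMap (r k : ℕ) : (Fin r → ℝ) →ₗ[ℝ] EuclideanSpace ℝ (Fin k) where
  toFun y := WithLp.toLp 2 (fun j : Fin k => if h : (j : ℕ) < r then y ⟨j, h⟩ else 0)
  map_add' y z := by
    ext j
    show (if h : (j : ℕ) < r then (y + z) ⟨j, h⟩ else 0)
      = (if h : (j : ℕ) < r then y ⟨j, h⟩ else 0) + (if h : (j : ℕ) < r then z ⟨j, h⟩ else 0)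
    split <;> simp
  map_smul' c y := by
    ext j
    show (if h : (j : ℕ) < r then (c • y) ⟨j, h⟩ else 0)
      = c * (if h : (j : ℕ) < r then y ⟨j, h⟩ else 0)
    split <;> simp

lemma phiMap_inj (r k : ℕ) (hrk : r ≤ k) : Function.Injective (phiMap r k) := by
  intro y z h
  funext i
  have := congrFun (congrArg WithLp.ofLp h) ⟨(i : ℕ), lt_of_lt_of_le i.isLt hrk⟩
  simpa [phiMap, i.isLt] using this

lemma phiMap_finrank (r k : ℕ) (hrk : r ≤ k) :
    Module.finrank ℝ (LinearMap.range (phiMap r k)) = r := by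
  rw [LinearMap.finrank_range_of_inj (phiMap_inj r k hrk), Module.finrank_fin_fun]

lemma phiMap_support (r k : ℕ) (x : EuclideanSpace ℝ (Fin k))
    (hx : x ∈ LinearMap.range (phiMap r k)) (j : Fin k) (hj : ¬ (j : ℕ) < r) : x j = 0 := by
  obtain ⟨y, rfl⟩ := hx
  simp [phiMap, hj]

end Aux

/-- For μ ∈ {1,-1}, real α, real ω ≠ α, and odd size k = 2s-1, the
Hermitian matrix L = μ((α-ω)F_k + G_k) has inertia
p₊(L) = s - 1 + (1 + μ·sign(α-ω))/2 and p₋(L) = s - 1 + (1 - μ·sign(α-ω))/2. -/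
theorem stmt11 (s : ℕ) (hs : 1 ≤ s) (μ α ω : ℝ) (hμ : μ = 1 ∨ μ = -1) (hω : ω ≠ α)
    (L : Matrix (Fin (2 * s - 1)) (Fin (2 * s - 1)) ℝ)
    (hLdef : L = μ • ((α - ω) • FmatR (2 * s - 1) + GmatR (2 * s - 1)))
    (hL : L.IsHermitian) :
    (Fintype.card {i // 0 < hL.eigenvalues i} : ℝ)
        = (s : ℝ) - 1 + (1 + μ * Real.sign (α - ω)) / 2 ∧
      (Fintype.card {i // hL.eigenvalues i < 0} : ℝ)
        = (s : ℝ) - 1 + (1 - μ * Real.sign (α - ω)) / 2 := by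
  obtain ⟨t, rfl⟩ : ∃ t, s = t + 1 := ⟨s - 1, by omega⟩
  clear hs
  set a := α - ω with ha
  have ha0 : a ≠ 0 := sub_ne_zero.mpr (Ne.symm hω)
  set P := Fintype.card {i // 0 < hL.eigenvalues i} with hP
  set N := Fintype.card {i // hL.eigenvalues i < 0} with hN
  -- determinant of L
  have hcard : Fintype.card (Fin (2 * (t + 1) - 1)) = 2 * t + 1 := by
    rw [Fintype.card_fin]
    omega
  have hμpow : μ ^ (2 * t + 1) = μ := by
    rcases hμ with rfl | rfl
    · simp
    · exact Odd.neg_one_pow ⟨t, by ring⟩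
  have hdet : L.det = μ * ((-1) ^ t * a ^ (2 * t + 1)) := by
    rw [hLdef, Matrix.det_smul, hcard, hμpow]
    have h1 : (a • FmatR (2 * (t + 1) - 1) + GmatR (2 * (t + 1) - 1)).det
        = (FmatR (2 * (t + 1) - 1)).det * a ^ (2 * (t + 1) - 1) :=
      detFG (2 * (t + 1) - 1) a
    rw [h1]
    have h2 : (FmatR (2 * (t + 1) - 1)).det = (-1 : ℝ) ^ t := detF_odd t
    rw [h2, show 2 * (t + 1) - 1 = 2 * t + 1 from by omega]
  have hdet0 : L.det ≠ 0 := by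
    rw [hdet]
    have h1 : μ ≠ 0 := by rcases hμ with rfl | rfl <;> norm_num
    exact mul_ne_zero h1 (mul_ne_zero (pow_ne_zero _ (by norm_num)) (pow_ne_zero _ ha0))
  -- eigenvalues are nonzero
  have hev : ∀ i, hL.eigenvalues i ≠ 0 := by
    intro i h
    apply hdet0
    rw [hL.det_eq_prod_eigenvalues]
    refine Finset.prod_eq_zero (Finset.mem_univ i) ?_
    rw [h]; norm_num
  -- P + N = 2t+1
  have hPN : P + N = 2 * t + 1 := by
    classical
    have hiff : ∀ i, hL.eigenvalues i < 0 ↔ ¬ 0 < hL.eigenvalues i := fun i =>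
      ⟨fun h => not_lt.mpr h.le, fun h => lt_of_le_of_ne (not_lt.mp h) (hev i)⟩
    rw [hP, hN, Fintype.card_subtype, Fintype.card_subtype]
    have hfe : (Finset.filter (fun i => hL.eigenvalues i < 0) Finset.univ)
        = Finset.filter (fun i => ¬ 0 < hL.eigenvalues i) Finset.univ :=
      Finset.filter_congr (fun i _ => by rw [hiff i])
    rw [hfe, Finset.card_filter_add_card_filter_not]
    simpa using hcard
  -- quadratic form vanishes on span of first t coordinates
  have hW : ∀ x ∈ LinearMap.range (phiMap t (2 * (t + 1) - 1)),
      ⟪x, (WithLp.toLp 2 (L *ᵥ x) : EuclideanSpace ℝ (Fin (2 * (t + 1) - 1)))⟫ = 0 := by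
    intro x hx
    rw [inner_eq_dot]
    simp only [dotProduct, WithLp.ofLp_toLp]
    refine Finset.sum_eq_zero fun i _ => ?_
    by_cases hi : (i : ℕ) < t
    · have : (L *ᵥ (x : Fin (2 * (t + 1) - 1) → ℝ)) i = 0 := by
        show ∑ j : Fin (2 * (t + 1) - 1), L i j * x j = 0
        refine Finset.sum_eq_zero fun j _ => ?_
        by_cases hj : (j : ℕ) < t
        · have hLz : L i j = 0 := by
            rw [hLdef]
            simp only [Matrix.smul_apply, Matrix.add_apply, FmatR, GmatR, Matrix.of_apply,
              smul_eq_mul]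
            rw [if_neg (by omega), if_neg (by omega)]
            ring
          rw [hLz]; ring
        · rw [phiMap_support t _ x hx j hj]; ring
      rw [this]; ring
    · rw [phiMap_support t _ x hx i hi]; ring
  have hPle : P + t ≤ 2 * t + 1 := by
    have := card_pos_le hL _ hW
    rwa [phiMap_finrank t _ (by omega)] at this
  have hNle : N + t ≤ 2 * t + 1 := by
    have := card_neg_le hL _ hW
    rwa [phiMap_finrank t _ (by omega)] at this
  -- sign of determinant vs parity of N
  have hsign : 0 < (-1 : ℝ) ^ N * L.det := by
    rw [hL.det_eq_prod_eigenvalues]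
    have hNe : ((-1 : ℝ) ^ N) = ∏ i, (if hL.eigenvalues i < 0 then (-1 : ℝ) else 1) := by
      rw [Finset.prod_ite, Finset.prod_const, Finset.prod_const, one_pow, mul_one,
        hN, Fintype.card_subtype]
    rw [hNe, ← Finset.prod_mul_distrib]
    apply Finset.prod_pos
    intro i _
    by_cases h : hL.eigenvalues i < 0
    · rw [if_pos h]; norm_num; linarith
    · rw [if_neg h]
      have : 0 < hL.eigenvalues i := lt_of_le_of_ne (not_lt.mp h) (Ne.symm (hev i))
      norm_num; linarith
  -- determine N
  have hNrange : N = t ∨ N = t + 1 := by omega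
  have hm1 : ((-1 : ℝ)) ^ t * (-1) ^ t = 1 := by
    rw [← pow_add, ← two_mul, pow_mul]; norm_num
  have hm2 : ((-1 : ℝ)) ^ (t + 1) * (-1) ^ t = -1 := by
    rw [← pow_add, show t + 1 + t = 2 * t + 1 by ring, pow_succ, pow_mul]; norm_num
  rw [hdet] at hsign
  have hNval : (μ = 1 ∧ 0 < a → N = t) ∧ (μ = 1 ∧ a < 0 → N = t + 1) ∧
      (μ = -1 ∧ 0 < a → N = t + 1) ∧ (μ = -1 ∧ a < 0 → N = t) := by
    refine ⟨fun ⟨h1, h2⟩ => ?_, fun ⟨h1, h2⟩ => ?_, fun ⟨h1, h2⟩ => ?_, fun ⟨h1, h2⟩ => ?_⟩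
    all_goals subst h1
    · rcases hNrange with h | h
      · exact h
      · exfalso; rw [h] at hsign
        have hc : 0 < a ^ (2 * t + 1) := pow_pos h2 _
        nlinarith [hm2]
    · rcases hNrange with h | h
      · exfalso; rw [h] at hsign
        have hc : a ^ (2 * t + 1) < 0 := Odd.pow_neg ⟨t, by ring⟩ h2
        nlinarith [hm1]
      · exact h
    · rcases hNrange with h | h
      · exfalso; rw [h] at hsign
        have hc : 0 < a ^ (2 * t + 1) := pow_pos h2 _
        nlinarith [hm1]
      · exact h
    · rcases hNrange with h | h
      · exact h
      · exfalso; rw [h] at hsign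
        have hc : a ^ (2 * t + 1) < 0 := Odd.pow_neg ⟨t, by ring⟩ h2
        nlinarith [hm2]
  -- conclude
  rcases hμ with rfl | rfl <;> rcases lt_or_gt_of_ne ha0 with haneg | hapos
  · -- μ = 1, a < 0
    have hNv : N = t + 1 := hNval.2.1 ⟨rfl, haneg⟩
    have hPv : P = t := by omega
    rw [Real.sign_of_neg haneg, hPv, hNv]
    constructor <;> push_cast <;> ring
  · -- μ = 1, a > 0
    have hNv : N = t := hNval.1 ⟨rfl, hapos⟩
    have hPv : P = t + 1 := by omega
    rw [Real.sign_of_pos hapos, hPv, hNv]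
    constructor <;> push_cast <;> ring
  · -- μ = -1, a < 0
    have hNv : N = t := hNval.2.2.2 ⟨rfl, haneg⟩
    have hPv : P = t + 1 := by omega
    rw [Real.sign_of_neg haneg, hPv, hNv]
    constructor <;> push_cast <;> ring
  · -- μ = -1, a > 0
    have hNv : N = t + 1 := hNval.2.2.1 ⟨rfl, hapos⟩
    have hPv : P = t := by omega
    rw [Real.sign_of_pos hapos, hPv, hNv]
    constructor <;> push_cast <;> ring
end

section
/- Let A(γ), B be Hermitian with B invertible, and suppose ω(γ) ≠ 0 and y(γ) are a differentiable eigenvalue/eigenvector family of the pencil (A(γ), B), i.e., A(γ)y(γ) = ω(γ) B y(γ), normalized so that y(γ)^H A(γ) y(γ) = 1. Then ω'(γ) = ω(γ) · y(γ)^H A'(γ) y(γ). -/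
open Matrix

lemma hasDerivAt_sesq {n : ℕ} (M : ℝ → Matrix (Fin n) (Fin n) ℂ)
    (M' : Matrix (Fin n) (Fin n) ℂ)
    (y : ℝ → Fin n → ℂ) (y' : Fin n → ℂ) (γ₀ : ℝ)
    (hM : ∀ i j, HasDerivAt (fun t => M t i j) (M' i j) γ₀)
    (hy : ∀ i, HasDerivAt (fun t => y t i) (y' i) γ₀) :
    HasDerivAt (fun t => star (y t) ⬝ᵥ (M t).mulVec (y t))
      (star y' ⬝ᵥ (M γ₀).mulVec (y γ₀) + star (y γ₀) ⬝ᵥ M'.mulVec (y γ₀)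
        + star (y γ₀) ⬝ᵥ (M γ₀).mulVec y') γ₀ := by
  have h : ∀ i j, HasDerivAt (fun t => star (y t i) * (M t i j * y t j))
      (star (y' i) * (M γ₀ i j * y γ₀ j)
        + star (y γ₀ i) * (M' i j * y γ₀ j + M γ₀ i j * y' j)) γ₀ := fun i j =>
    (hy i).star.mul ((hM i j).mul (hy j))
  have H := HasDerivAt.fun_sum (fun i (_ : i ∈ Finset.univ) =>
    HasDerivAt.fun_sum (fun j (_ : j ∈ Finset.univ) => h i j))
  convert H using 1
  · ext t
    simp [dotProduct, mulVec, Finset.mul_sum]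
  · simp [dotProduct, mulVec, Finset.mul_sum, mul_add, Finset.sum_add_distrib]
  · simp [dotProduct, mulVec, Finset.mul_sum, mul_add, Finset.sum_add_distrib]
    ring

/-- For a differentiable family of eigenpairs A(γ)y(γ) = ω(γ)By(γ) of a
Hermitian pencil with B invertible, ω(γ) ≠ 0, normalized by y(γ)ᴴA(γ)y(γ) = 1, one has
ω'(γ) = ω(γ) · y(γ)ᴴ A'(γ) y(γ). -/
theorem stmt19 {n : ℕ} (A : ℝ → Matrix (Fin n) (Fin n) ℂ)
    (B : Matrix (Fin n) (Fin n) ℂ)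
    (hA : ∀ t, (A t).IsHermitian) (hB : B.IsHermitian) (hBinv : IsUnit B.det)
    (ω : ℝ → ℝ) (hω : ∀ t, ω t ≠ 0)
    (y : ℝ → Fin n → ℂ)
    (heig : ∀ t, (A t).mulVec (y t) = (ω t : ℂ) • B.mulVec (y t))
    (hnorm : ∀ t, star (y t) ⬝ᵥ (A t).mulVec (y t) = 1)
    (γ₀ : ℝ) (A' : Matrix (Fin n) (Fin n) ℂ) (ω' : ℝ) (y' : Fin n → ℂ)
    (hA' : ∀ i j, HasDerivAt (fun t => A t i j) (A' i j) γ₀)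
    (hω' : HasDerivAt ω ω' γ₀)
    (hy' : ∀ i, HasDerivAt (fun t => y t i) (y' i) γ₀) :
    (ω' : ℂ) = ((ω γ₀ : ℝ) : ℂ) * (star (y γ₀) ⬝ᵥ A'.mulVec (y γ₀)) := by
  set v := y γ₀ with hv
  set w : ℂ := ((ω γ₀ : ℝ) : ℂ) with hw
  have hw0 : w ≠ 0 := by simp [hw, hω γ₀]
  -- derivative of the normalization is 0
  have hD := hasDerivAt_sesq A A' y y' γ₀ hA' hy'
  have hD0 : star y' ⬝ᵥ (A γ₀).mulVec v + star v ⬝ᵥ A'.mulVec v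
      + star v ⬝ᵥ (A γ₀).mulVec y' = 0 := by
    have hconst : HasDerivAt (fun t => star (y t) ⬝ᵥ (A t).mulVec (y t)) 0 γ₀ := by
      have : (fun t => star (y t) ⬝ᵥ (A t).mulVec (y t)) = fun _ => (1 : ℂ) :=
        funext fun t => hnorm t
      rw [this]; exact hasDerivAt_const _ _
    exact hD.unique hconst
  -- star y ⬝ B y = 1/ω
  have hg : ∀ t, star (y t) ⬝ᵥ B.mulVec (y t) = (((ω t)⁻¹ : ℝ) : ℂ) := by
    intro t
    have hωt : ((ω t : ℝ) : ℂ) ≠ 0 := by simp [hω t]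
    have h1 : (1:ℂ) = ((ω t : ℝ):ℂ) * (star (y t) ⬝ᵥ B.mulVec (y t)) := by
      rw [← hnorm t, heig t, dotProduct_smul, smul_eq_mul]
    push_cast
    field_simp
    linear_combination -h1
  -- derivative of star y ⬝ B y
  have hE := hasDerivAt_sesq (fun _ => B) 0 y y' γ₀
    (fun i j => by simpa using hasDerivAt_const γ₀ (B i j)) hy'
  have hE' : HasDerivAt (fun t => star (y t) ⬝ᵥ B.mulVec (y t))
      (((-ω' / (ω γ₀)^2 : ℝ)) : ℂ) γ₀ := by
    have heq : (fun t => star (y t) ⬝ᵥ B.mulVec (y t)) = fun t => (((ω t)⁻¹ : ℝ) : ℂ) :=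
      funext hg
    rw [heq]
    exact (hω'.inv (hω γ₀)).ofReal_comp
  have hEeq : star y' ⬝ᵥ B.mulVec v + star v ⬝ᵥ B.mulVec y'
      = ((-ω' / (ω γ₀)^2 : ℝ) : ℂ) := by
    have := hE.unique hE'
    simpa [Matrix.zero_mulVec] using this
  -- rewrite A-terms using the eigen equation
  have h1 : star y' ⬝ᵥ (A γ₀).mulVec v = w * (star y' ⬝ᵥ B.mulVec v) := by
    rw [heig γ₀, dotProduct_smul, smul_eq_mul]
  have h2 : star v ⬝ᵥ (A γ₀).mulVec y' = w * (star v ⬝ᵥ B.mulVec y') := by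
    have hAh : vecMul (star v) (A γ₀) = star ((A γ₀).mulVec v) := by
      rw [Matrix.star_mulVec, (hA γ₀).eq]
    have hBh : vecMul (star v) B = star (B.mulVec v) := by
      rw [Matrix.star_mulVec, hB.eq]
    rw [dotProduct_mulVec, hAh, heig γ₀, star_smul, smul_dotProduct]
    rw [dotProduct_mulVec, hBh]
    simp [Complex.star_def, smul_eq_mul]
    rfl
  rw [h1, h2] at hD0
  -- multiply hEeq by w^2 to clear denominators
  have h4 : w^2 * (star y' ⬝ᵥ B.mulVec v + star v ⬝ᵥ B.mulVec y') = -(ω' : ℂ) := by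
    rw [hEeq, hw]
    push_cast
    field_simp
    rw [mul_div_assoc, mul_comm, div_mul_cancel₀ _ (by exact_mod_cast hω γ₀ : ((ω γ₀ : ℝ) : ℂ) ≠ 0)]
  linear_combination h4 - w * hD0
end
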